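/- Translation of at-next into until: for all words w, positions i, and formulas φ, ψ of a temporal logic containing both the strict until U and the deterministically guarded at-next X_φ, the equivalence w,i ⊨ X_φ ψ iff w,i ⊨ (¬φ) U (φ∧ψ) holds, where w,i ⊨ X_φ ψ iff ∃j>i with w,j ⊨ φ∧ψ and ∀k, i<k<j implies w,k ⊭ φ, and w,i ⊨ α U β iff ∃m>i with w,m ⊨ β and ∀l, i<l<m implies w,l ⊨ α. -/

import Mathlib

/-- Letter at 1-based position `i` of word `w`. -/
def letterAt {A : Type} (w : List A) (i : ℕ) : Option A := w[i - 1]?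

/-- A temporal logic containing both the strict until/since and the
deterministically guarded at-next/at-prev modalities. -/
inductive TFrm (A : Type) where
  | atom (a : A)
  | not (φ : TFrm A)
  | or (φ ψ : TFrm A)
  | and (φ ψ : TFrm A)
  | until (φ ψ : TFrm A)
  | since (φ ψ : TFrm A)
  | atnext (φ ψ : TFrm A)
  | atprev (φ ψ : TFrm A)

/-- Satisfaction, with strict semantics: `φ U ψ` holds at `i` iff some strictly
later position `m` satisfies `ψ` with `φ` at all positions strictly between;
`X_φ ψ` requires `ψ` at the first strictly later position where `φ` holds. -/
def Sat {A : Type} (w : List A) : ℕ → TFrm A → Prop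
  | i, .atom a => letterAt w i = some a
  | i, .not φ => ¬ Sat w i φ
  | i, .or φ ψ => Sat w i φ ∨ Sat w i ψ
  | i, .and φ ψ => Sat w i φ ∧ Sat w i ψ
  | i, .until φ ψ => ∃ m, i < m ∧ m ≤ w.length ∧ Sat w m ψ ∧
      ∀ l, i < l → l < m → Sat w l φ
  | i, .since φ ψ => ∃ m, 1 ≤ m ∧ m < i ∧ Sat w m ψ ∧
      ∀ l, m < l → l < i → Sat w l φ
  | i, .atnext φ ψ => ∃ j, i < j ∧ j ≤ w.length ∧ Sat w j φ ∧ Sat w j ψ ∧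
      ∀ k, i < k → k < j → ¬ Sat w k φ
  | i, .atprev φ ψ => ∃ j, 1 ≤ j ∧ j < i ∧ Sat w j φ ∧ Sat w j ψ ∧
      ∀ k, j < k → k < i → ¬ Sat w k φ

/-- **at-next translates into until.** For all words `w`,
positions `i`, and formulas `φ, ψ`: `w,i ⊨ X_φ ψ` iff `w,i ⊨ (¬φ) U (φ ∧ ψ)`. -/
theorem atnext_eq_until {A : Type} (w : List A) (i : ℕ) (φ ψ : TFrm A) :
    Sat w i (.atnext φ ψ) ↔ Sat w i (.until (.not φ) (.and φ ψ)) := by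
  constructor
  · rintro ⟨j, hij, hjl, hφ, hψ, hmin⟩
    exact ⟨j, hij, hjl, ⟨hφ, hψ⟩, fun l h1 h2 => hmin l h1 h2⟩
  · rintro ⟨m, him, hml, ⟨hφ, hψ⟩, hbet⟩
    exact ⟨m, him, hml, hφ, hψ, fun k h1 h2 => hbet k h1 h2⟩
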